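/- Let X ⊆ ℝⁿ be nonempty closed convex, f : ℝⁿ → ℝ be μ-strongly convex on X with L-Lipschitz continuous gradient, and let x* = argmin_{x∈X} f(x). Given x ∈ X, γ ≥ L, and h ∈ (0,1], define x̂ = Π_X(x − (1/γ)∇f(x)) and x⁺ = x + h(x̂ − x). Then ‖x⁺ − x*‖ ≤ ρ‖x − x*‖ where ρ = (1 − hμ/γ)^{1/2}, and 0 ≤ ρ < 1. -/

import Mathlib

open scoped RealInnerProductSpace

lemma descent_aux {n : ℕ} {X : Set (EuclideanSpace ℝ (Fin n))} (hXcv : Convex ℝ X)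
    {f : EuclideanSpace ℝ (Fin n) → ℝ}
    {g : EuclideanSpace ℝ (Fin n) → EuclideanSpace ℝ (Fin n)}
    (hg : ∀ x, HasGradientAt f (g x) x) {L : ℝ} (hL : 0 ≤ L)
    (hlip : ∀ a ∈ X, ∀ b ∈ X, ‖g a - g b‖ ≤ L * ‖a - b‖)
    {x y : EuclideanSpace ℝ (Fin n)} (hx : x ∈ X) (hy : y ∈ X) :
    f y ≤ f x + ⟪g x, y - x⟫ + (L/2) * ‖y - x‖^2 := by
  set d := y - x with hd
  have hc : ∀ t ∈ Set.Icc (0:ℝ) 1, x + t • d ∈ X := by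
    intro t ht
    have h' := hXcv hx hy (by linarith [ht.2] : (0:ℝ) ≤ 1 - t) ht.1 (by ring)
    convert h' using 1
    rw [hd]; module
  have hderiv : ∀ t : ℝ, HasDerivAt
      (fun s => f (x + s • d) - s * ⟪g x, d⟫ - L/2 * s^2 * ‖d‖^2)
      (⟪g (x + t • d), d⟫ - ⟪g x, d⟫ - L * t * ‖d‖^2) t := by
    intro t
    have h1 : HasDerivAt (fun s : ℝ => x + s • d) d t := by
      simpa using ((hasDerivAt_id t).smul_const d).const_add x
    have h2 : HasDerivAt (fun s : ℝ => f (x + s • d)) ⟪g (x + t • d), d⟫ t := by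
      have := (hg (x + t • d)).hasFDerivAt.comp_hasDerivAt t h1
      rw [InnerProductSpace.toDual_apply_apply] at this
      exact this
    have h3 : HasDerivAt (fun s : ℝ => s * ⟪g x, d⟫) ⟪g x, d⟫ t := by
      simpa using (hasDerivAt_id t).mul_const ⟪g x, d⟫
    have h4 : HasDerivAt (fun s : ℝ => L/2 * s^2 * ‖d‖^2) (L * t * ‖d‖^2) t := by
      have := ((hasDerivAt_pow 2 t).const_mul (L/2)).mul_const (‖d‖^2)
      rw [show L * t * ‖d‖^2 = L/2 * (((2:ℕ):ℝ) * t^(2-1)) * ‖d‖^2 by push_cast; ring]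
      exact this
    exact (h2.sub h3).sub h4
  have hant : AntitoneOn
      (fun s => f (x + s • d) - s * ⟪g x, d⟫ - L/2 * s^2 * ‖d‖^2)
      (Set.Icc (0:ℝ) 1) := by
    apply antitoneOn_of_deriv_nonpos (convex_Icc 0 1)
    · exact fun t _ => (hderiv t).differentiableAt.continuousAt.continuousWithinAt
    · exact fun t _ => (hderiv t).differentiableAt.differentiableWithinAt
    · intro t ht
      rw [interior_Icc] at ht
      rw [(hderiv t).deriv]
      have hmem := hc t ⟨le_of_lt ht.1, le_of_lt ht.2⟩
      have hl := hlip (x + t • d) hmem x hx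
      have hn : ‖x + t • d - x‖ = t * ‖d‖ := by
        rw [add_sub_cancel_left, norm_smul, Real.norm_eq_abs, abs_of_pos ht.1]
      rw [hn] at hl
      have hinner : ⟪g (x + t • d), d⟫ - ⟪g x, d⟫ = ⟪g (x + t • d) - g x, d⟫ := by
        rw [inner_sub_left]
      have hcs : ⟪g (x + t • d) - g x, d⟫ ≤ ‖g (x + t • d) - g x‖ * ‖d‖ :=
        real_inner_le_norm _ _
      rw [hinner]
      nlinarith [norm_nonneg d, hcs, hl]
  have h01 : (0:ℝ) ∈ Set.Icc (0:ℝ) 1 := ⟨le_refl 0, zero_le_one⟩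
  have h11 : (1:ℝ) ∈ Set.Icc (0:ℝ) 1 := ⟨zero_le_one, le_refl 1⟩
  have := hant h01 h11 zero_le_one
  simp only [one_smul, zero_smul, add_zero, one_pow, mul_one, zero_pow, mul_zero,
    zero_mul, sub_zero] at this
  have hxy : x + d = y := by rw [hd]; abel
  rw [hxy] at this
  linarith

set_option maxHeartbeats 1000000 in
theorem stmt_2 {n : ℕ} (X : Set (EuclideanSpace ℝ (Fin n)))
    (hXne : X.Nonempty) (hXcl : IsClosed X) (hXcv : Convex ℝ X)
    (f : EuclideanSpace ℝ (Fin n) → ℝ)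
    (g : EuclideanSpace ℝ (Fin n) → EuclideanSpace ℝ (Fin n))
    (hg : ∀ x, HasGradientAt f (g x) x)
    (μ L γ h : ℝ) (hμ : 0 < μ) (hμL : μ ≤ L) (hLγ : L ≤ γ)
    (hh0 : 0 < h) (hh1 : h ≤ 1)
    (hsc : ∀ x ∈ X, ∀ y ∈ X, f y ≥ f x + ⟪g x, y - x⟫ + (μ/2) * ‖y - x‖^2)
    (hlip : ∀ x ∈ X, ∀ y ∈ X, ‖g x - g y‖ ≤ L * ‖x - y‖)
    (xstar : EuclideanSpace ℝ (Fin n)) (hxstar : xstar ∈ X)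
    (hmin : ∀ z ∈ X, f xstar ≤ f z)
    (x : EuclideanSpace ℝ (Fin n)) (hx : x ∈ X)
    (xhat : EuclideanSpace ℝ (Fin n)) (hhat : xhat ∈ X)
    (hproj : ∀ z ∈ X, ‖xhat - (x - (1/γ) • g x)‖ ≤ ‖z - (x - (1/γ) • g x)‖)
    (xplus : EuclideanSpace ℝ (Fin n)) (hplus : xplus = x + h • (xhat - x)) :
    ‖xplus - xstar‖ ≤ Real.sqrt (1 - h * μ / γ) * ‖x - xstar‖
    ∧ 0 ≤ Real.sqrt (1 - h * μ / γ) ∧ Real.sqrt (1 - h * μ / γ) < 1 := by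
  have hγ0 : 0 < γ := lt_of_lt_of_le hμ (hμL.trans hLγ)
  set p := x - (1/γ) • g x with hp
  haveI : Nonempty X := hXne.to_subtype
  -- projection variational inequality
  have heq : ‖p - xhat‖ = ⨅ w : X, ‖p - w‖ := by
    apply le_antisymm
    · exact le_ciInf fun w => by
        rw [norm_sub_rev, norm_sub_rev p]; exact hproj w w.2
    · have hbdd : BddBelow (Set.range fun w : X => ‖p - (w : EuclideanSpace ℝ (Fin n))‖) := by
        refine ⟨0, ?_⟩
        rintro r ⟨w, rfl⟩
        exact norm_nonneg _
      exact ciInf_le hbdd ⟨xhat, hhat⟩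
  have hVI := (norm_eq_iInf_iff_real_inner_le_zero hXcv hhat).mp heq xstar hxstar
  -- rewrite VI
  have hVI' : γ * ⟪x - xhat, xstar - xhat⟫ ≤ ⟪g x, xstar - xhat⟫ := by
    have hexp : p - xhat = (x - xhat) - (1/γ) • g x := by rw [hp]; abel
    rw [hexp, inner_sub_left, real_inner_smul_left] at hVI
    have := mul_nonpos_of_nonneg_of_nonpos (le_of_lt hγ0) hVI
    rw [mul_sub] at this
    have hγne : γ ≠ 0 := ne_of_gt hγ0
    have : γ * ⟪x - xhat, xstar - xhat⟫ - γ * (1/γ * ⟪g x, xstar - xhat⟫) ≤ 0 := this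
    rw [← mul_assoc, mul_one_div, div_self hγne, one_mul] at this
    linarith
  -- strong convexity at x, xstar
  have hSC := hsc x hx xstar hxstar
  -- descent lemma with constant γ (since L ≤ γ)
  have hlipγ : ∀ a ∈ X, ∀ b ∈ X, ‖g a - g b‖ ≤ γ * ‖a - b‖ := by
    intro a ha b hb
    exact (hlip a ha b hb).trans (by nlinarith [norm_nonneg (a - b)])
  have hDL := descent_aux hXcv hg (le_of_lt hγ0) hlipγ hx hhat
  have hM := hmin xhat hhat
  -- key contraction for xhat
  have hkey : γ * ‖xhat - xstar‖^2 ≤ (γ - μ) * ‖x - xstar‖^2 := by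
    have hid : ‖(x - xhat) - (xstar - xhat)‖^2
        = ‖x - xhat‖^2 - 2 * ⟪x - xhat, xstar - xhat⟫ + ‖xstar - xhat‖^2 :=
      norm_sub_sq_real _ _
    have he1 : (x - xhat) - (xstar - xhat) = x - xstar := by abel
    rw [he1] at hid
    have hi2 : ⟪g x, xhat - x⟫ - ⟪g x, xstar - x⟫ = -⟪g x, xstar - xhat⟫ := by
      rw [← inner_sub_right, ← inner_neg_right]
      congr 1
      abel
    have hn1 : ‖xstar - x‖ = ‖x - xstar‖ := norm_sub_rev _ _
    have hn2 : ‖xhat - xstar‖ = ‖xstar - xhat‖ := norm_sub_rev _ _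
    have hn3 : ‖xhat - x‖ = ‖x - xhat‖ := norm_sub_rev _ _
    rw [hn1] at hSC
    rw [hn3] at hDL
    rw [hn2]
    have hK : ⟪x - xhat, xstar - xhat⟫
        = (‖x - xhat‖^2 + ‖xstar - xhat‖^2 - ‖x - xstar‖^2)/2 := by linarith [hid]
    rw [hK] at hVI'
    have hVI'' : γ * (‖x - xhat‖^2 + ‖xstar - xhat‖^2 - ‖x - xstar‖^2)/2
        ≤ ⟪g x, xstar - xhat⟫ := by linarith [hVI']
    linarith [hVI'', hSC, hDL, hM, hi2]
  set A := ‖x - xstar‖ with hA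
  set B := ‖xhat - xstar‖ with hB
  have hA0 : 0 ≤ A := norm_nonneg _
  have hB0 : 0 ≤ B := norm_nonneg _
  set q := Real.sqrt (1 - μ/γ) with hq
  have hr1 : 0 ≤ 1 - μ/γ := by
    rw [sub_nonneg]
    exact div_le_one_of_le₀ (hμL.trans hLγ) (le_of_lt hγ0)
  have hq2 : q^2 = 1 - μ/γ := Real.sq_sqrt hr1
  have hq0 : 0 ≤ q := Real.sqrt_nonneg _
  have hBqA : B ≤ q * A := by
    have h1 : B^2 ≤ (q * A)^2 := by
      have : γ * B^2 ≤ (γ - μ) * A^2 := hkey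
      have hexp : (q * A)^2 = (1 - μ/γ) * A^2 := by rw [mul_pow, hq2]
      have hfrac : 1 - μ/γ = (γ - μ)/γ := by field_simp
      rw [hexp, hfrac, div_mul_eq_mul_div, le_div_iff₀ hγ0]
      nlinarith [hkey]
    calc B = Real.sqrt (B^2) := (Real.sqrt_sq hB0).symm
    _ ≤ Real.sqrt ((q*A)^2) := Real.sqrt_le_sqrt h1
    _ = q * A := Real.sqrt_sq (mul_nonneg hq0 hA0)
  -- norm of xplus - xstar
  have hsplit : xplus - xstar = (1 - h) • (x - xstar) + h • (xhat - xstar) := by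
    rw [hplus]; module
  have hnp : ‖xplus - xstar‖ ≤ (1 - h) * A + h * B := by
    rw [hsplit]
    calc ‖(1 - h) • (x - xstar) + h • (xhat - xstar)‖
        ≤ ‖(1 - h) • (x - xstar)‖ + ‖h • (xhat - xstar)‖ := norm_add_le _ _
      _ = (1 - h) * A + h * B := by
          rw [norm_smul, norm_smul, Real.norm_eq_abs, Real.norm_eq_abs,
            abs_of_nonneg (by linarith : (0:ℝ) ≤ 1 - h), abs_of_pos hh0]
  have hρnn : 0 ≤ Real.sqrt (1 - h * μ / γ) := Real.sqrt_nonneg _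
  have hhr0 : 0 ≤ 1 - h * μ / γ := by
    have : h * μ / γ ≤ 1 := by
      rw [div_le_one hγ0]
      nlinarith
    linarith
  have hs : (1 - h) + h * q ≤ Real.sqrt (1 - h * μ / γ) := by
    apply Real.le_sqrt_of_sq_le
    have hq2h : h * q^2 = h - h * μ / γ := by rw [hq2]; ring
    nlinarith [mul_nonneg (mul_nonneg hh0.le (by linarith : (0:ℝ) ≤ 1 - h)) (sq_nonneg (1 - q)), hq2h]
  refine ⟨?_, hρnn, ?_⟩
  · calc ‖xplus - xstar‖ ≤ (1 - h) * A + h * B := hnp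
      _ ≤ (1 - h) * A + h * (q * A) := by
          nlinarith [mul_le_mul_of_nonneg_left hBqA hh0.le]
      _ = ((1 - h) + h * q) * A := by ring
      _ ≤ Real.sqrt (1 - h * μ / γ) * A := mul_le_mul_of_nonneg_right hs hA0
  · have h1 : 1 - h * μ / γ < 1 := by
      have : 0 < h * μ / γ := div_pos (mul_pos hh0 hμ) hγ0
      linarith
    calc Real.sqrt (1 - h * μ / γ) < Real.sqrt 1 := Real.sqrt_lt_sqrt hhr0 h1
      _ = 1 := Real.sqrt_one
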